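/- arXiv:0907.3863 — 4 statements merged into one kernel-verified Lean document; each statement's English description precedes it below -/
import Mathlib

section
/- For 0 < q < 1, the bounded operators a and b on ℓ²(ℕ × ℤ, ℂ) defined on the canonical orthonormal basis by a ξ_{n,k} = √(1 − q^{2n}) ξ_{n−1,k} and b ξ_{n,k} = q^n ξ_{n,k+1} satisfy the defining relations of the quantum group SU_q(2): a* a + b* b = 1, a a* + q² b b* = 1, a b = q · b a, a* b = q⁻¹ · b a*, and b b* = b* b. -/
noncomputable section

/-- The Hilbert space `ℓ²(ℕ × ℤ, ℂ)`. -/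
abbrev H : Type := lp (fun _ : ℕ × ℤ => ℂ) 2

/-- The canonical orthonormal basis vector `ξ_{n,k}` of `ℓ²(ℕ × ℤ, ℂ)`.
(The convention `ξ_{n,k} = 0` for `n < 0` is realized via truncated subtraction
on `ℕ` together with the vanishing coefficient `√(1 - q⁰) = 0`.) -/
def ξ (p : ℕ × ℤ) : H := lp.single 2 p 1

open scoped InnerProductSpace

lemma coeff_eq (f : H) (p : ℕ × ℤ) : ⟪ξ p, f⟫_ℂ = f p := by
  rw [ξ, lp.inner_single_left]
  simp

lemma inner_xi (p p' : ℕ × ℤ) : ⟪ξ p, ξ p'⟫_ℂ = if p' = p then 1 else 0 := by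
  rw [coeff_eq, ξ, lp.single_apply]
  by_cases h : p = p' <;> simp [h, eq_comm]

lemma vec_ext {f g : H} (h : ∀ p, ⟪ξ p, f⟫_ℂ = ⟪ξ p, g⟫_ℂ) : f = g := by
  apply lp.ext
  funext p
  have := h p
  rwa [coeff_eq, coeff_eq] at this

lemma clm_ext {T S : H →L[ℂ] H} (h : ∀ p, T (ξ p) = S (ξ p)) : T = S := by
  refine ContinuousLinearMap.ext fun f => ?_
  have h1 : HasSum (fun p => lp.single 2 p (f p)) f := lp.hasSum_single ENNReal.ofNat_ne_top f
  have hT := h1.mapL T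
  have hS := h1.mapL S
  have key : (fun p => T (lp.single 2 p (f p))) = fun p => S (lp.single 2 p (f p)) := by
    funext p
    have hsingle : lp.single 2 p (f p) = (f p) • ξ p := by
      rw [ξ, ← lp.single_smul]; norm_num
    rw [hsingle, map_smul, map_smul, h]
  exact hT.unique (key ▸ hS)
open ContinuousLinearMap in
theorem stmt_2 (q : ℝ) (hq0 : 0 < q) (hq1 : q < 1)
    (a b : H →L[ℂ] H)
    (ha : ∀ (n : ℕ) (k : ℤ),
      a (ξ (n, k)) = (Real.sqrt (1 - q ^ (2 * n)) : ℂ) • ξ (n - 1, k))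
    (hb : ∀ (n : ℕ) (k : ℤ), b (ξ (n, k)) = ((q ^ n : ℝ) : ℂ) • ξ (n, k + 1)) :
    adjoint a * a + adjoint b * b = 1 ∧
    a * adjoint a + ((q : ℂ) ^ 2) • (b * adjoint b) = 1 ∧
    a * b = (q : ℂ) • (b * a) ∧
    adjoint a * b = ((q : ℂ)⁻¹) • (b * adjoint a) ∧
    b * adjoint b = adjoint b * b := by
  have ha' : ∀ (n : ℕ) (k : ℤ),
      adjoint a (ξ (n, k)) = (Real.sqrt (1 - q ^ (2 * (n + 1))) : ℂ) • ξ (n + 1, k) := by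
    intro n k
    apply vec_ext
    rintro ⟨m, j⟩
    rw [ContinuousLinearMap.adjoint_inner_right, ha]
    rw [inner_smul_left, inner_smul_right, inner_xi, inner_xi]
    rcases m with _ | m
    · simp
    · simp only [Nat.add_sub_cancel, Prod.mk.injEq, Complex.conj_ofReal]
      by_cases h1 : n = m
      · subst h1
        by_cases h2 : k = j <;> simp [h2]
      · simp [h1, fun h => h1 (Nat.succ_injective h).symm, Ne.symm h1]
  have hb' : ∀ (n : ℕ) (k : ℤ),
      adjoint b (ξ (n, k)) = ((q ^ n : ℝ) : ℂ) • ξ (n, k - 1) := by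
    intro n k
    apply vec_ext
    rintro ⟨m, j⟩
    rw [ContinuousLinearMap.adjoint_inner_right, hb]
    rw [inner_smul_left, inner_smul_right, inner_xi, inner_xi]
    simp only [Prod.mk.injEq, Complex.conj_ofReal]
    by_cases h1 : n = m
    · subst h1
      by_cases h2 : k = j + 1
      · simp [h2]
      · have h3 : k - 1 ≠ j := fun h => h2 (by omega)
        simp [h2, h3]
    · simp [h1, Ne.symm h1]
  have hsq : ∀ m : ℕ, (0:ℝ) ≤ 1 - q ^ m := fun m => by
    have := pow_le_one₀ hq0.le hq1.le (n := m); linarith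
  refine ⟨?_, ?_, ?_, ?_, ?_⟩
  · apply clm_ext
    rintro ⟨n, k⟩
    rw [ContinuousLinearMap.add_apply, ContinuousLinearMap.mul_apply, ContinuousLinearMap.mul_apply, ha, hb, ContinuousLinearMap.one_apply,
      map_smul, map_smul, ha', hb']
    rcases n with _ | n
    · norm_num
    · simp only [Nat.add_sub_cancel, smul_smul, add_sub_cancel_right]
      rw [← add_smul]
      have : ((Real.sqrt (1 - q ^ (2 * (n+1))) : ℂ)) * (Real.sqrt (1 - q ^ (2 * (n + 1))) : ℂ)
          + ((q ^ (n+1) : ℝ) : ℂ) * ((q ^ (n+1) : ℝ) : ℂ) = 1 := by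
        push_cast [← Complex.ofReal_mul]
        rw [Real.mul_self_sqrt (hsq _)]
        push_cast
        ring
      rw [this, one_smul]
  · apply clm_ext
    rintro ⟨n, k⟩
    rw [ContinuousLinearMap.add_apply, ContinuousLinearMap.smul_apply, ContinuousLinearMap.mul_apply, ContinuousLinearMap.mul_apply, ha', hb', ContinuousLinearMap.one_apply,
      map_smul, map_smul, ha, hb]
    simp only [Nat.add_sub_cancel, smul_smul, sub_add_cancel]
    rw [← add_smul]
    have : ((Real.sqrt (1 - q ^ (2 * (n+1))) : ℂ)) * (Real.sqrt (1 - q ^ (2 * (n + 1))) : ℂ)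
        + (q:ℂ)^2 * (((q ^ n : ℝ) : ℂ) * ((q ^ n : ℝ) : ℂ)) = 1 := by
      rw [← Complex.ofReal_mul, Real.mul_self_sqrt (hsq _)]
      push_cast
      ring
    rw [this, one_smul]
  · apply clm_ext
    rintro ⟨n, k⟩
    rw [ContinuousLinearMap.mul_apply, ContinuousLinearMap.smul_apply, ContinuousLinearMap.mul_apply, hb, ha, map_smul, map_smul, ha, hb]
    rcases n with _ | n
    · norm_num
    · simp only [Nat.add_sub_cancel, smul_smul]
      congr 1
      push_cast
      ring
  · apply clm_ext
    rintro ⟨n, k⟩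
    rw [ContinuousLinearMap.mul_apply, ContinuousLinearMap.smul_apply, ContinuousLinearMap.mul_apply, hb, ha', map_smul, map_smul, ha', hb]
    simp only [smul_smul]
    congr 1
    have hqc : (q:ℂ) ≠ 0 := Complex.ofReal_ne_zero.mpr hq0.ne'
    field_simp
    push_cast
    ring
  · apply clm_ext
    rintro ⟨n, k⟩
    rw [ContinuousLinearMap.mul_apply, ContinuousLinearMap.mul_apply, hb, hb', map_smul, map_smul, hb', hb]
    simp only [smul_smul, add_sub_cancel_right, sub_add_cancel]

end
end

section
/- For 0 < q < 1 and every i ∈ ℕ, the diagonal projection e_{ii} ⊗ 1 (the bounded operator on ℓ²(ℕ × ℤ, ℂ) sending ξ_{n,k} to δ_{i,n} ξ_{i,k}) belongs to the double centralizer (bicommutant) of the set {b, b*} inside the ring of bounded operators on ℓ²(ℕ × ℤ, ℂ), where b is the operator determined by b ξ_{n,k} = q^n ξ_{n,k+1}. -/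
noncomputable section

lemma xi_hasSum (v : H) : HasSum (fun p : ℕ × ℤ => v p • ξ p) v := by
  have h := lp.hasSum_single (E := fun _ : ℕ × ℤ => ℂ) ENNReal.ofNat_ne_top v
  have e : ∀ p : ℕ × ℤ, v p • ξ p = lp.single 2 p (v p) := by
    intro p
    rw [ξ, ← lp.single_smul]
    norm_num
  simpa [e] using h

lemma inner_xi_s5 (p : ℕ × ℤ) (v : H) : (inner ℂ (ξ p) v : ℂ) = v p := by
  rw [ξ, lp.inner_single_left]
  simp [RCLike.inner_apply]

lemma clm_ext_xi {S S' : H →L[ℂ] H} (h : ∀ p, S (ξ p) = S' (ξ p)) : S = S' := by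
  refine ContinuousLinearMap.ext fun v => ?_
  have h1 := (xi_hasSum v).mapL S
  have h2 := (xi_hasSum v).mapL S'
  simp only [map_smul, h] at h1 h2
  exact h1.unique h2

lemma xi_apply (r p : ℕ × ℤ) : (ξ r : ∀ _ : ℕ × ℤ, ℂ) p = if p = r then 1 else 0 := by
  rw [ξ, lp.single_apply]
  split <;> simp_all

open ContinuousLinearMap in
lemma adj_xi (q : ℝ) (b : H →L[ℂ] H)
    (hb : ∀ (n : ℕ) (k : ℤ), b (ξ (n, k)) = ((q ^ n : ℝ) : ℂ) • ξ (n, k + 1)) :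
    ∀ (n : ℕ) (k : ℤ), adjoint b (ξ (n, k)) = ((q ^ n : ℝ) : ℂ) • ξ (n, k - 1) := by
  intro n k
  apply lp.ext
  funext r
  obtain ⟨m, l⟩ := r
  have h1 : (adjoint b (ξ (n, k)) : ∀ _ : ℕ × ℤ, ℂ) (m, l)
      = inner ℂ (ξ (m, l)) (adjoint b (ξ (n, k))) := (inner_xi_s5 _ _).symm
  rw [h1, adjoint_inner_right, hb, inner_smul_left, inner_xi_s5]
  have h2 : ((((q ^ n : ℝ) : ℂ) • ξ (n, k - 1) : H) : ∀ _ : ℕ × ℤ, ℂ) (m, l)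
      = ((q ^ n : ℝ) : ℂ) * (ξ (n, k - 1) : ∀ _ : ℕ × ℤ, ℂ) (m, l) := by
    rw [lp.coeFn_smul]; simp
  rw [h2, xi_apply, xi_apply, Complex.conj_ofReal]
  by_cases hm : m = n
  · subst hm
    by_cases hl : l = k - 1
    · subst hl; simp [sub_add_cancel]
    · have : ¬ ((m : ℕ), l + 1) = (m, k) := by simp; omega
      simp [this, hl]
  · simp [Prod.ext_iff, hm]

open ContinuousLinearMap in
/-- The diagonal projection `e_{ii} ⊗ 1` lies in the double centralizer
(bicommutant) of `{b, b*}` in `B(ℓ²(ℕ × ℤ))`. -/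
theorem stmt_5 (q : ℝ) (hq0 : 0 < q) (hq1 : q < 1)
    (b : H →L[ℂ] H)
    (hb : ∀ (n : ℕ) (k : ℤ), b (ξ (n, k)) = ((q ^ n : ℝ) : ℂ) • ξ (n, k + 1))
    (i : ℕ) (P : H →L[ℂ] H)
    (hP : ∀ (n : ℕ) (k : ℤ), P (ξ (n, k)) = if i = n then ξ (i, k) else 0) :
    P ∈ Set.centralizer (Set.centralizer {b, adjoint b}) := by
  rw [Set.mem_centralizer_iff]
  intro T hT
  rw [Set.mem_centralizer_iff] at hT
  have hTb : b * T = T * b := hT b (Set.mem_insert _ _)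
  have hTb' : adjoint b * T = T * adjoint b :=
    hT (adjoint b) (Set.mem_insert_iff.mpr (Or.inr rfl))
  have hadj := adj_xi q b hb
  set A : H →L[ℂ] H := adjoint b * b with hAdef
  have hA : ∀ (n : ℕ) (k : ℤ),
      A (ξ (n, k)) = ((q ^ n : ℝ) : ℂ) • ((q ^ n : ℝ) : ℂ) • ξ (n, k) := by
    intro n k
    rw [hAdef, mul_apply_eq_comp, hb, map_smul, hadj]
    simp
  have hsa : adjoint A = A := by
    rw [hAdef, ← star_eq_adjoint, star_mul, star_eq_adjoint, star_eq_adjoint, adjoint_adjoint]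
  have hTA : A * T = T * A := by
    rw [hAdef, mul_assoc, hTb, ← mul_assoc, hTb', mul_assoc]
  -- injectivity of n ↦ q^n * q^n
  have hqinj : ∀ m n : ℕ, m ≠ n →
      ((q ^ m : ℝ) : ℂ) * ((q ^ m : ℝ) : ℂ) ≠ ((q ^ n : ℝ) : ℂ) * ((q ^ n : ℝ) : ℂ) := by
    intro m n hmn h
    have hR : q ^ m * q ^ m = q ^ n * q ^ n := by exact_mod_cast h
    have hpow : q ^ m ≠ q ^ n := by
      rcases lt_or_gt_of_ne hmn with h' | h'
      · exact ne_of_gt (pow_lt_pow_right_of_lt_one₀ hq0 hq1 h')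
      · exact ne_of_lt (pow_lt_pow_right_of_lt_one₀ hq0 hq1 h')
    rcases mul_self_eq_mul_self_iff.mp hR with h' | h'
    · exact hpow h'
    · have := pow_pos hq0 m
      have := pow_pos hq0 n
      linarith
  apply clm_ext_xi
  rintro ⟨n, k⟩
  set v : H := T (ξ (n, k)) with hvdef
  have hvA : A v = ((q ^ n : ℝ) : ℂ) • ((q ^ n : ℝ) : ℂ) • v := by
    rw [hvdef, ← mul_apply_eq_comp, hTA, mul_apply_eq_comp, hA, map_smul, map_smul]
  have hsupp : ∀ (m : ℕ) (l : ℤ), m ≠ n → (v : ∀ _ : ℕ × ℤ, ℂ) (m, l) = 0 := by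
    intro m l hm
    have e1 : (inner ℂ (ξ (m, l)) (A v) : ℂ)
        = ((q ^ m : ℝ) : ℂ) * ((q ^ m : ℝ) : ℂ) * (v : ∀ _ : ℕ × ℤ, ℂ) (m, l) := by
      rw [← adjoint_inner_left, hsa, hA, inner_smul_left, inner_smul_left, inner_xi_s5]
      simp only [Complex.conj_ofReal]
      ring
    have e2 : (inner ℂ (ξ (m, l)) (A v) : ℂ)
        = ((q ^ n : ℝ) : ℂ) * ((q ^ n : ℝ) : ℂ) * (v : ∀ _ : ℕ × ℤ, ℂ) (m, l) := by
      rw [hvA, inner_smul_right, inner_smul_right, inner_xi_s5]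
      ring
    by_contra hne
    exact hqinj m n hm (mul_right_cancel₀ hne (e1.symm.trans e2))
  have hPv : P v = if i = n then v else 0 := by
    have hs := (xi_hasSum v).mapL P
    simp only [map_smul] at hs
    by_cases hin : i = n
    · subst hin
      rw [if_pos rfl]
      have e : ∀ p : ℕ × ℤ, (v : ∀ _ : ℕ × ℤ, ℂ) p • P (ξ p)
          = (v : ∀ _ : ℕ × ℤ, ℂ) p • ξ p := by
        rintro ⟨m, l⟩
        by_cases hm : m = i
        · subst hm; rw [hP, if_pos rfl]
        · rw [hsupp m l hm, zero_smul, zero_smul]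
      simp only [e] at hs
      exact hs.unique (xi_hasSum v)
    · rw [if_neg hin]
      have e : ∀ p : ℕ × ℤ, (v : ∀ _ : ℕ × ℤ, ℂ) p • P (ξ p) = 0 := by
        rintro ⟨m, l⟩
        by_cases hm : i = m
        · subst hm; rw [hsupp i l hin, zero_smul]
        · rw [hP, if_neg hm, smul_zero]
      simp only [e] at hs
      exact hs.unique hasSum_zero
  rw [mul_apply_eq_comp, mul_apply_eq_comp, hP, ← hvdef, hPv]
  by_cases hin : i = n
  · subst hin; rw [if_pos rfl, if_pos rfl, hvdef]
  · rw [if_neg hin, if_neg hin, map_zero]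

end
end

section
/- Let A be a unital complex *-algebra with a linear functional φ : A → ℂ. Let B ⊆ A be a unital *-subalgebra, and let d ∈ B be a unitary element (d* d = d d* = 1) lying in the center of B, such that φ(d) = φ(d*) = 0. Let u ∈ A be a Haar unitary which is *-free from B with respect to φ. Then ud is a Haar unitary which is *-free from B with respect to φ; that is, (ud)*(ud) = (ud)(ud)* = 1, φ((ud)^n) = 0 and φ(((ud)*)^n) = 0 for every integer n ≥ 1, and the unital *-subalgebra generated by ud is free from B with respect to φ. -/
set_option linter.unusedSectionVars false
set_option maxHeartbeats 1000000

noncomputable section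

/-- Two subsets `A₁, A₂` of a unital complex algebra are *free* with respect to a
linear functional `φ` if `φ(x₁ x₂ ⋯ x_k) = 0` whenever every `x_i` is centered
(`φ(x_i) = 0`), each `x_i` belongs to `A₁` or `A₂`, and consecutive `x_i`
belong to different ones of the two (alternation). -/
def IsFreePair {A : Type*} [Ring A] [Algebra ℂ A]
    (φ : A →ₗ[ℂ] ℂ) (A₁ A₂ : Set A) : Prop :=
  ∀ (k : ℕ) (x : Fin (k + 1) → A) (f : Fin (k + 1) → Bool),
    (∀ i, x i ∈ (if f i then A₁ else A₂)) →
    (∀ i, φ (x i) = 0) →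
    (∀ i : Fin k, f i.castSucc ≠ f i.succ) →
    φ (List.ofFn x).prod = 0

/-- A *Haar unitary* with respect to `φ`: a unitary `u` with
`φ(uⁿ) = φ((u*)ⁿ) = 0` for all `n ≥ 1`. -/
def IsHaarUnitary {A : Type*} [Ring A] [StarRing A] [Algebra ℂ A]
    (φ : A →ₗ[ℂ] ℂ) (u : A) : Prop :=
  star u * u = 1 ∧ u * star u = 1 ∧
    ∀ n : ℕ, 1 ≤ n → φ (u ^ n) = 0 ∧ φ ((star u) ^ n) = 0

namespace Stmt9

variable {A : Type*} [Ring A] [StarRing A] [Algebra ℂ A] [StarModule ℂ A]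

def upw (u : A) (s : Bool) (m : ℕ) : A := if s then u ^ m else (star u) ^ m

def prodl (l : List (Bool × A)) : A := (l.map Prod.snd).prod

def OkL (φ : A →ₗ[ℂ] ℂ) (B : StarSubalgebra ℂ A) (u : A) (l : List (Bool × A)) : Prop :=
  l.Chain' (fun p q => p.1 ≠ q.1) ∧
  ∀ p ∈ l, φ p.2 = 0 ∧
    p.2 ∈ (if p.1 then ((StarAlgebra.adjoin ℂ {u} : StarSubalgebra ℂ A) : Set A) else (B : Set A))

def Pref (φ : A →ₗ[ℂ] ℂ) (B : StarSubalgebra ℂ A) (u : A) (s : Bool) (P : A) : Prop :=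
  ∃ ws m, OkL φ B u (ws ++ [(true, upw u s m)]) ∧ P = prodl (ws ++ [(true, upw u s m)])

variable {φ : A →ₗ[ℂ] ℂ} {B : StarSubalgebra ℂ A} {u : A}

theorem prodl_nil : prodl ([] : List (Bool × A)) = 1 := rfl

theorem prodl_cons (p : Bool × A) (l : List (Bool × A)) :
    prodl (p :: l) = p.2 * prodl l := by simp [prodl]

theorem prodl_concat (l : List (Bool × A)) (p : Bool × A) :
    prodl (l ++ [p]) = prodl l * p.2 := by simp [prodl]

theorem upw_mem (u : A) (s : Bool) (m : ℕ) :
    upw u s m ∈ (StarAlgebra.adjoin ℂ {u} : StarSubalgebra ℂ A) := by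
  cases s <;> simp only [upw, if_true, if_false, Bool.false_eq_true] <;>
    exact pow_mem (by first
      | exact StarAlgebra.self_mem_adjoin_singleton ℂ u
      | exact star_mem (StarAlgebra.self_mem_adjoin_singleton ℂ u)) m

theorem upw_phi (hu : IsHaarUnitary φ u) (s : Bool) {m : ℕ} (hm : 1 ≤ m ∨ φ (1 : A) = 0) :
    φ (upw u s m) = 0 := by
  rcases Nat.eq_zero_or_pos m with h0 | h1
  · subst h0
    rcases hm with hm | hm
    · omega
    · cases s <;> simpa [upw] using hm
  · cases s
    · simpa [upw] using (hu.2.2 m h1).2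
    · simpa [upw] using (hu.2.2 m h1).1

theorem upw_mul (u : A) (s : Bool) (m : ℕ) : upw u s m * upw u s 1 = upw u s (m + 1) := by
  cases s <;> simp [upw, pow_succ]

theorem OkL.snoc {l : List (Bool × A)} (h : OkL φ B u l) (f : Bool) (c : A)
    (hlast : ∀ q ∈ l.getLast?, q.1 ≠ f) (hφc : φ c = 0)
    (hc : c ∈ (if f then ((StarAlgebra.adjoin ℂ {u} : StarSubalgebra ℂ A) : Set A)
        else (B : Set A))) :
    OkL φ B u (l ++ [(f, c)]) := by
  refine ⟨List.isChain_append.2 ⟨h.1, List.isChain_singleton _, ?_⟩, ?_⟩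
  · intro x hx y hy
    simp only [List.head?_cons, Option.mem_some_iff] at hy
    subst hy
    exact hlast x hx
  · intro p hp
    rcases List.mem_append.1 hp with hp | hp
    · exact h.2 p hp
    · simp only [List.mem_singleton] at hp
      subst hp
      exact ⟨hφc, hc⟩

theorem okL_phi
    (hufree : IsFreePair φ
      ((StarAlgebra.adjoin ℂ {u} : StarSubalgebra ℂ A) : Set A) (B : Set A))
    {l : List (Bool × A)} (h : OkL φ B u l) (hne : l ≠ []) : φ (prodl l) = 0 := by
  rcases l with _ | ⟨a, t⟩
  · exact absurd rfl hne
  have halt : ∀ i : Fin t.length,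
      (fun j : Fin (t.length + 1) => ((a :: t).get j).1) i.castSucc ≠
      (fun j : Fin (t.length + 1) => ((a :: t).get j).1) i.succ := by
    intro i
    have hlt : (i : ℕ) < (a :: t).length - 1 := by
      simpa using i.isLt
    exact List.isChain_iff_getElem.1 h.1 i.val (by simpa using i.isLt)
  have hx := hufree t.length (fun j => ((a :: t).get j).2) (fun j => ((a :: t).get j).1)
    (fun j => (h.2 _ (List.get_mem _ _)).2) (fun j => (h.2 _ (List.get_mem _ _)).1) halt
  have hofn : List.ofFn (fun j : Fin (t.length + 1) => ((a :: t).get j).2) =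
      (a :: t).map Prod.snd := by
    rw [show (fun j : Fin (t.length + 1) => ((a :: t).get j).2) =
      Prod.snd ∘ (a :: t).get from rfl, ← List.map_ofFn, List.ofFn_get]
  rw [prodl, ← hofn]
  exact hx

theorem OkL.last_change {ws : List (Bool × A)} {x y : A}
    (h : OkL φ B u (ws ++ [(true, x)])) (hφy : φ y = 0)
    (hy : y ∈ (StarAlgebra.adjoin ℂ {u} : StarSubalgebra ℂ A)) :
    OkL φ B u (ws ++ [(true, y)]) := by
  constructor
  · have h1 : List.Chain' (· ≠ ·) (((ws ++ [(true, x)])).map Prod.fst) :=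
      (List.isChain_map _).2 h.1
    rw [show ((ws ++ [(true, x)]).map Prod.fst) = ((ws ++ [(true, y)]).map Prod.fst) by
      simp] at h1
    exact (List.isChain_map _).1 h1
  · intro p hp
    rcases List.mem_append.1 hp with hp | hp
    · exact h.2 p (List.mem_append_left _ hp)
    · simp only [List.mem_singleton] at hp
      subst hp
      exact ⟨hφy, by rw [if_pos rfl]; exact hy⟩

theorem Pref.vanish
    (hufree : IsFreePair φ
      ((StarAlgebra.adjoin ℂ {u} : StarSubalgebra ℂ A) : Set A) (B : Set A))
    {s : Bool} {P : A} (hP : Pref φ B u s P) : φ P = 0 := by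
  obtain ⟨ws, m, hOk, rfl⟩ := hP
  exact okL_phi hufree hOk (by simp)

theorem Pref.vanishb
    (hufree : IsFreePair φ
      ((StarAlgebra.adjoin ℂ {u} : StarSubalgebra ℂ A) : Set A) (B : Set A))
    {s : Bool} {P : A} (hP : Pref φ B u s P) {b : A} (hb : b ∈ B) (hφb : φ b = 0) :
    φ (P * b) = 0 := by
  obtain ⟨ws, m, hOk, rfl⟩ := hP
  have h2 : OkL φ B u ((ws ++ [(true, upw u s m)]) ++ [(false, b)]) := by
    refine hOk.snoc false b ?_ hφb (by rw [if_neg Bool.false_ne_true]; exact hb)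
    intro q hq
    rw [List.getLast?_concat] at hq
    simp only [Option.mem_some_iff] at hq
    subst hq
    simp
  have := okL_phi hufree h2 (by simp)
  rwa [prodl_concat] at this

theorem Pref.init (hu : IsHaarUnitary φ u) (s : Bool) {m : ℕ}
    (hm : 1 ≤ m ∨ φ (1 : A) = 0) : Pref φ B u s (upw u s m) := by
  refine ⟨[], m, ⟨List.isChain_singleton _, ?_⟩, by simp [prodl]⟩
  intro p hp
  simp only [List.nil_append, List.mem_singleton] at hp
  subst hp
  exact ⟨upw_phi hu s hm, by rw [if_pos rfl]; exact upw_mem u s m⟩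

theorem Pref.initb (hu : IsHaarUnitary φ u) {b : A} (hb : b ∈ B) (hφb : φ b = 0)
    (s : Bool) {m : ℕ} (hm : 1 ≤ m ∨ φ (1 : A) = 0) : Pref φ B u s (b * upw u s m) := by
  refine ⟨[(false, b)], m, ⟨?_, ?_⟩, by simp [prodl]⟩
  · exact List.isChain_pair.2 (by simp)
  · intro p hp
    simp only [List.cons_append, List.nil_append, List.mem_cons, List.mem_singleton,
      List.not_mem_nil, or_false] at hp
    rcases hp with hp | hp <;> subst hp
    · exact ⟨hφb, by rw [if_neg Bool.false_ne_true]; exact hb⟩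
    · exact ⟨upw_phi hu s hm, by rw [if_pos rfl]; exact upw_mem u s m⟩

theorem Pref.extend (hu : IsHaarUnitary φ u) {t : Bool} {P : A} (hP : Pref φ B u t P)
    {b : A} (hb : b ∈ B) (hφb : φ b = 0) (s : Bool) {m : ℕ} (hm : 1 ≤ m ∨ φ (1 : A) = 0) :
    Pref φ B u s (P * b * upw u s m) := by
  obtain ⟨ws, m₀, hOk, rfl⟩ := hP
  refine ⟨(ws ++ [(true, upw u t m₀)]) ++ [(false, b)], m, ?_, ?_⟩
  · refine OkL.snoc ?_ true (upw u s m) ?_ (upw_phi hu s hm)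
      (by rw [if_pos rfl]; exact upw_mem u s m)
    · refine hOk.snoc false b ?_ hφb (by rw [if_neg Bool.false_ne_true]; exact hb)
      intro q hq
      rw [List.getLast?_concat] at hq
      simp only [Option.mem_some_iff] at hq
      subst hq
      simp
    · intro q hq
      rw [List.getLast?_concat] at hq
      simp only [Option.mem_some_iff] at hq
      subst hq
      simp
  · simp [prodl, mul_assoc]

theorem Pref.bump (hu : IsHaarUnitary φ u) {s : Bool} {P : A} (hP : Pref φ B u s P) :
    Pref φ B u s (P * upw u s 1) := by
  obtain ⟨ws, m, hOk, rfl⟩ := hP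
  refine ⟨ws, m + 1, hOk.last_change (upw_phi hu s (Or.inl (by omega))) (upw_mem u s (m + 1)),
    ?_⟩
  rw [prodl_concat, prodl_concat, mul_assoc, upw_mul]

theorem Pref.block (hu : IsHaarUnitary φ u) {s : Bool} {P : A} (hP : Pref φ B u s P)
    {e : A} (he : e ∈ B) (hφe : φ e = 0) (k : ℕ) :
    Pref φ B u s (P * (e * upw u s 1) ^ k) := by
  induction k with
  | zero => simpa using hP
  | succ k ih =>
      have := (ih.extend hu he hφe s (Or.inl le_rfl))
      rw [pow_succ, ← mul_assoc, ← mul_assoc]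
      exact this


theorem phi_one_zero_mul
    (hufree : IsFreePair φ
      ((StarAlgebra.adjoin ℂ {u} : StarSubalgebra ℂ A) : Set A) (B : Set A))
    (h1 : φ (1 : A) = 0) {b₁ b₂ : A} (hb₁ : b₁ ∈ B) (hb₂ : b₂ ∈ B)
    (hφ₁ : φ b₁ = 0) (hφ₂ : φ b₂ = 0) : φ (b₁ * b₂) = 0 := by
  have h := hufree 2 ![b₁, 1, b₂] ![false, true, false] ?_ ?_ ?_
  · simpa [List.ofFn_succ] using h
  · intro i
    fin_cases i
    · simpa using hb₁
    · show (1 : A) ∈ (if (true : Bool) = true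
          then ((StarAlgebra.adjoin ℂ {u} : StarSubalgebra ℂ A) : Set A) else (B : Set A))
      rw [if_pos rfl]
      exact one_mem _
    · simpa using hb₂
  · intro i
    fin_cases i <;> simp [hφ₁, h1, hφ₂]
  · intro i
    revert i
    decide

theorem shift_pow (a b : A) (k : ℕ) : a * (b * a) ^ k = (a * b) ^ k * a := by
  induction k with
  | zero => simp
  | succ k ih =>
      rw [pow_succ, ← mul_assoc, ih, pow_succ]
      simp [mul_assoc]

theorem id_pos (u d : A) (k : ℕ) : (u * d) ^ (k + 1) = u * ((d * u) ^ k * d) := by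
  rw [← mul_assoc, shift_pow, mul_assoc, ← pow_succ]

theorem id_neg (c e : A) (k : ℕ) : (c * e) ^ (k + 1) = c * (e * (c * e) ^ k) := by
  rw [pow_succ']
  simp [mul_assoc]


theorem main (d : A)
    (hd2 : d * star d = 1)
    (hdB : d ∈ B) (hcen : ∀ x ∈ B, d * x = x * d)
    (hφd : φ d = 0) (hφds : φ (star d) = 0)
    (hu : IsHaarUnitary φ u)
    (hufree : IsFreePair φ
      ((StarAlgebra.adjoin ℂ {u} : StarSubalgebra ℂ A) : Set A) (B : Set A))
    (w : ℤ → A)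
    (hw1 : ∀ k : ℕ, w (Int.ofNat (k + 1)) = (u * d) ^ (k + 1))
    (hwn : ∀ k : ℕ, w (Int.negSucc k) = (star d * star u) ^ (k + 1))
    (hw0 : w (Int.ofNat 0) = 1) :
    ∀ (N : ℕ) (l : List (Bool × A)), l.length ≤ N →
      l.Chain' (fun p q => p.1 ≠ q.1) →
      (∀ p ∈ l, if p.1 then
          p.2 ∈ Submodule.span ℂ (w '' {n : ℤ | n ≠ 0 ∨ φ (1 : A) = 0})
        else (p.2 ∈ B ∧ φ p.2 = 0)) →
      (∀ p ∈ l.head?, p.1 = false) →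
      ∀ (os : Option Bool) (pd : Bool) (P : A),
        (∀ s, os = some s → Pref φ B u s P) →
        (os = none → P = 1 ∧ pd = false ∧ l ≠ []) →
        (pd = true → os = some true) →
        (φ (1 : A) ≠ 0 → pd = false → os ≠ some true) →
        φ (P * (if pd then d else 1) * prodl l) = 0 := by
  have hup1 : upw u true 1 = u := by simp [upw]
  have hupf : upw u false 1 = star u := by simp [upw]
  have hdsB : star d ∈ B := star_mem hdB
  have hsm : ∀ (c : ℂ), c • (1 : A) ∈ B := fun c => by
    rw [← Algebra.algebraMap_eq_smul_one]; exact algebraMap_mem B c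
  have hEmpty : ∀ (os : Option Bool) (pd : Bool) (P : A),
      (∀ s, os = some s → Pref φ B u s P) → (os = none → False) →
      φ (P * (if pd then d else 1) * prodl []) = 0 := by
    intro os pd P hPref hnone
    rcases os with _ | s
    · exact absurd rfl hnone
    · have hP := hPref s rfl
      rw [prodl_nil, mul_one]
      cases pd with
      | false => simpa using hP.vanish hufree
      | true => simpa using hP.vanishb hufree hdB hφd
  intro N
  induction N with
  | zero =>
      intro l hlen _ _ _ os pd P hPref hnone _ _
      have hl : l = [] := List.length_eq_zero_iff.1 (Nat.le_zero.1 hlen)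
      subst hl
      exact hEmpty os pd P hPref (fun h => (hnone h).2.2 rfl)
  | succ N IH =>
      intro l hlen hch hmem hhd os pd P hPref hnone hpd hbump
      rcases l with _ | ⟨⟨f, b⟩, l'⟩
      · exact hEmpty os pd P hPref (fun h => (hnone h).2.2 rfl)
      have hf : f = false := hhd (f, b) rfl
      subst hf
      have hbB : b ∈ B ∧ φ b = 0 := by
        have := hmem (false, b) (List.mem_cons_self)
        simpa using this
      rcases l' with _ | ⟨⟨g, x⟩, l''⟩
      · -- single letter (false, b)
        rw [prodl_cons, prodl_nil, mul_one]
        rcases os with _ | s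
        · obtain ⟨hP1, hpd0, _⟩ := hnone rfl
          subst hP1; subst hpd0
          simpa using hbB.2
        · have hP := hPref s rfl
          cases pd with
          | false =>
              rw [if_neg Bool.false_ne_true, mul_one]
              exact hP.vanishb hufree hbB.1 hbB.2
          | true =>
              rw [if_pos rfl]
              by_cases h1 : φ (1 : A) = 0
              · have hc : φ (d * b) = 0 :=
                  phi_one_zero_mul hufree h1 hdB hbB.1 hφd hbB.2
                have := hP.vanishb hufree (mul_mem hdB hbB.1) hc
                rw [mul_assoc]
                exact this
              · set c := φ (d * b) / φ 1 with hcdef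
                have he : φ (d * b - c • 1) = 0 := by
                  rw [map_sub, map_smul, smul_eq_mul, hcdef, div_mul_cancel₀ _ h1, sub_self]
                have heq : P * d * b = P * (d * b - c • 1) + c • P := by
                  have h2 : d * b = (d * b - c • 1) + c • 1 := by abel
                  calc P * d * b = P * ((d * b - c • 1) + c • 1) := by rw [mul_assoc, ← h2]
                    _ = P * (d * b - c • 1) + c • P := by
                        rw [mul_add, mul_smul_comm, mul_one]
                rw [heq, map_add, map_smul, smul_eq_mul,
                  hP.vanishb hufree (sub_mem (mul_mem hdB hbB.1) (hsm c)) he,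
                  hP.vanish hufree, mul_zero, add_zero]
      · -- at least two letters
        have hg : g = true := by
          have hne := (List.isChain_cons_cons.1 hch).1
          cases g
          · exact absurd rfl hne
          · rfl
        subst hg
        have hx : x ∈ Submodule.span ℂ (w '' {n : ℤ | n ≠ 0 ∨ φ (1 : A) = 0}) := by
          have := hmem (true, x) (List.mem_cons_of_mem _ (List.mem_cons_self))
          simpa using this
        have hch'' : l''.Chain' (fun p q => p.1 ≠ q.1) :=
          ((List.isChain_cons_cons.1 hch).2).tail
        have hmem'' : ∀ p ∈ l'', if p.1 then
            p.2 ∈ Submodule.span ℂ (w '' {n : ℤ | n ≠ 0 ∨ φ (1 : A) = 0})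
          else (p.2 ∈ B ∧ φ p.2 = 0) := fun p hp => hmem p (by simp [hp])
        have hhd'' : ∀ p ∈ l''.head?, p.1 = false := by
          intro p hp
          have h2 := (List.isChain_cons.1 (List.isChain_cons_cons.1 hch).2).1 p hp
          cases hq : p.1
          · rfl
          · rw [hq] at h2; exact absurd rfl h2
        have hlen'' : l''.length ≤ N := by
          simp only [List.length_cons] at hlen
          omega
        have CALL : ∀ (s : Bool) (Q : A), Pref φ B u s Q →
            φ (Q * (if s then d else 1) * prodl l'') = 0 := by
          intro s Q hQ
          refine IH l'' hlen'' hch'' hmem'' hhd'' (some s) s Q ?_ (by simp) ?_ ?_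
          · intro t ht
            cases Option.some.inj ht
            exact hQ
          · intro h; rw [h]
          · intro _ hf
            rw [hf]
            simp
        have hnone' : os = none → P = 1 := fun h => (hnone h).1
        have getP : ∀ (s : Bool) (e : A) (m : ℕ), e ∈ B → φ e = 0 →
            (1 ≤ m ∨ φ (1 : A) = 0) → Pref φ B u s (P * e * upw u s m) := by
          intro s e m he hφe hm
          rcases os with _ | t
          · rw [hnone' rfl, one_mul]
            exact Pref.initb hu he hφe s hm
          · exact (hPref t rfl).extend hu he hφe s hm
        rw [prodl_cons, prodl_cons]
        set X := prodl l'' with hX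
        clear hch hmem hhd hlen hnone
        induction hx using Submodule.span_induction with
        | zero => simp
        | add y z hy hz ihy ihz =>
            simp only [add_mul, mul_add, map_add, ihy, ihz, add_zero]
        | smul a y hy ih =>
            simp only [smul_mul_assoc, mul_smul_comm, map_smul, smul_eq_mul, ih, mul_zero]
        | mem y hy =>
            obtain ⟨n, hn, rfl⟩ := hy
            simp only [Set.mem_setOf_eq] at hn
            cases n with
            | ofNat m =>
                cases m with
                | zero =>
                    have h1 : φ (1 : A) = 0 := hn.resolve_left (by simp)
                    rw [hw0]
                    cases pd with
                    | false =>
                        have hQ : Pref φ B u false (P * b * upw u false 0) :=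
                          getP false b 0 hbB.1 hbB.2 (Or.inr h1)
                        have h0 := CALL false _ hQ
                        simp only [upw, Bool.false_eq_true, if_false, pow_zero, mul_one,
                          one_mul, mul_assoc] at h0 ⊢
                        exact h0
                    | true =>
                        have hos := hpd rfl
                        rw [if_pos rfl]
                        have hc0 : φ (d * b) = 0 :=
                          phi_one_zero_mul hufree h1 hdB hbB.1 hφd hbB.2
                        have hQ : Pref φ B u false (P * (d * b) * upw u false 0) :=
                          getP false (d * b) 0 (mul_mem hdB hbB.1) hc0 (Or.inr h1)
                        have h0 := CALL false _ hQ
                        simp only [upw, Bool.false_eq_true, if_false, pow_zero, mul_one,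
                          one_mul, mul_assoc] at h0 ⊢
                        exact h0
                | succ k =>
                    rw [hw1 k]
                    cases pd with
                    | false =>
                        rw [if_neg Bool.false_ne_true]
                        have hQ := (getP true b 1 hbB.1 hbB.2 (Or.inl le_rfl)).block
                          hu hdB hφd k
                        have h0 := CALL true _ hQ
                        rw [id_pos]
                        simp only [hup1, if_pos, reduceIte, mul_one, one_mul,
                          mul_assoc] at h0 ⊢
                        exact h0
                    | true =>
                        have hos := hpd rfl
                        have hP := hPref true hos
                        rw [if_pos rfl]
                        by_cases h1 : φ (1 : A) = 0
                        · have hc0 : φ (d * b) = 0 :=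
                            phi_one_zero_mul hufree h1 hdB hbB.1 hφd hbB.2
                          have hQ := (getP true (d * b) 1 (mul_mem hdB hbB.1) hc0
                            (Or.inl le_rfl)).block hu hdB hφd k
                          have h0 := CALL true _ hQ
                          rw [id_pos]
                          simp only [hup1, reduceIte, Bool.false_eq_true, if_false, mul_one, one_mul, mul_assoc] at h0 ⊢
                          exact h0
                        · set c := φ (d * b) / φ 1 with hcdef
                          have he : φ (d * b - c • 1) = 0 := by
                            rw [map_sub, map_smul, smul_eq_mul, hcdef,
                              div_mul_cancel₀ _ h1, sub_self]
                          have heB : d * b - c • 1 ∈ B :=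
                            sub_mem (mul_mem hdB hbB.1) (hsm c)
                          have heq : P * d * (b * ((u * d) ^ (k + 1) * X)) =
                              P * (d * b - c • 1) * ((u * d) ^ (k + 1) * X) +
                                c • (P * ((u * d) ^ (k + 1) * X)) := by
                            have h2 : d * b = (d * b - c • 1) + c • 1 := by abel
                            calc P * d * (b * ((u * d) ^ (k + 1) * X))
                                = P * ((d * b) * ((u * d) ^ (k + 1) * X)) := by
                                  simp only [mul_assoc]
                              _ = P * (((d * b - c • 1) + c • 1) *
                                    ((u * d) ^ (k + 1) * X)) := by rw [← h2]
                              _ = _ := by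
                                  simp only [add_mul, mul_add, smul_mul_assoc, one_mul,
                                    mul_smul_comm, mul_assoc]
                          rw [heq, map_add, map_smul, smul_eq_mul]
                          have t1 : φ (P * (d * b - c • 1) * ((u * d) ^ (k + 1) * X)) = 0 := by
                            have hQ := (hP.extend hu heB he true (Or.inl le_rfl)).block
                              hu hdB hφd k
                            have h0 := CALL true _ hQ
                            rw [id_pos]
                            simp only [hup1, reduceIte, Bool.false_eq_true, if_false, mul_one, one_mul, mul_assoc] at h0 ⊢
                            exact h0
                          have t2 : φ (P * ((u * d) ^ (k + 1) * X)) = 0 := by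
                            have hQ := (hP.bump hu).block hu hdB hφd k
                            have h0 := CALL true _ hQ
                            rw [id_pos]
                            simp only [hup1, reduceIte, Bool.false_eq_true, if_false, mul_one, one_mul, mul_assoc] at h0 ⊢
                            exact h0
                          rw [t1, t2, mul_zero, add_zero]
            | negSucc k =>
                rw [hwn k]
                cases pd with
                | true =>
                    have hos := hpd rfl
                    have hP := hPref true hos
                    rw [if_pos rfl]
                    have hjb : d * (b * star d) = b := by
                      rw [← mul_assoc, hcen b hbB.1, mul_assoc, hd2, mul_one]
                    have hQ := (hP.extend hu hbB.1 hbB.2 false (Or.inl le_rfl)).block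
                      hu hdsB hφds k
                    have h0 := CALL false _ hQ
                    rw [id_neg]
                    have heq2 : P * d * (b * ((star d * (star u * (star d * star u) ^ k)) * X)) =
                        P * (d * (b * star d)) * (star u * ((star d * star u) ^ k * X)) := by
                      simp only [mul_assoc]
                    rw [heq2, hjb]
                    simp only [hupf, reduceIte, Bool.false_eq_true, if_false, mul_one, one_mul, mul_assoc] at h0 ⊢
                    exact h0
                | false =>
                    rw [if_neg Bool.false_ne_true]
                    by_cases h1 : φ (1 : A) = 0
                    · have hc0 : φ (b * star d) = 0 :=
                        phi_one_zero_mul hufree h1 hbB.1 hdsB hbB.2 hφds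
                      have hQ := (getP false (b * star d) 1 (mul_mem hbB.1 hdsB) hc0
                        (Or.inl le_rfl)).block hu hdsB hφds k
                      have h0 := CALL false _ hQ
                      rw [id_neg]
                      simp only [hupf, reduceIte, Bool.false_eq_true, if_false, mul_one, one_mul, mul_assoc] at h0 ⊢
                      exact h0
                    · set c := φ (b * star d) / φ 1 with hcdef
                      have he : φ (b * star d - c • 1) = 0 := by
                        rw [map_sub, map_smul, smul_eq_mul, hcdef,
                          div_mul_cancel₀ _ h1, sub_self]
                      have heB : b * star d - c • 1 ∈ B :=
                        sub_mem (mul_mem hbB.1 hdsB) (hsm c)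
                      have heq : P * 1 * (b * ((star d * star u) ^ (k + 1) * X)) =
                          P * (b * star d - c • 1) * (star u * ((star d * star u) ^ k * X)) +
                            c • (P * (star u * ((star d * star u) ^ k * X))) := by
                        rw [id_neg]
                        have h2 : b * star d = (b * star d - c • 1) + c • 1 := by abel
                        calc P * 1 * (b * ((star d * (star u * (star d * star u) ^ k)) * X))
                            = P * ((b * star d) * (star u * ((star d * star u) ^ k * X))) := by
                              simp only [mul_assoc, one_mul, mul_one]
                          _ = P * (((b * star d - c • 1) + c • 1) *
                                (star u * ((star d * star u) ^ k * X))) := by rw [← h2]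
                          _ = _ := by
                              simp only [add_mul, mul_add, smul_mul_assoc, one_mul,
                                mul_smul_comm, mul_assoc]
                      rw [heq, map_add, map_smul, smul_eq_mul]
                      have t1 : φ (P * (b * star d - c • 1) *
                          (star u * ((star d * star u) ^ k * X))) = 0 := by
                        have hQ := (getP false _ 1 heB he (Or.inl le_rfl)).block
                          hu hdsB hφds k
                        have h0 := CALL false _ hQ
                        simp only [hupf, reduceIte, Bool.false_eq_true, if_false, mul_one, one_mul, mul_assoc] at h0 ⊢
                        exact h0
                      have t2 : φ (P * (star u * ((star d * star u) ^ k * X))) = 0 := by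
                        rcases os with _ | t
                        · have hP1 := hnone' rfl
                          have hQ := (Pref.init hu false
                            (Or.inl le_rfl) (B := B)).block hu hdsB hφds k
                          have h0 := CALL false _ hQ
                          rw [hP1]
                          simp only [hupf, reduceIte, Bool.false_eq_true, if_false, mul_one, one_mul, mul_assoc] at h0 ⊢
                          exact h0
                        · have ht : t = false := by
                            cases t
                            · rfl
                            · exact absurd rfl (hbump h1 rfl)
                          subst ht
                          have hQ := ((hPref false rfl).bump hu).block hu hdsB hφds k
                          have h0 := CALL false _ hQ
                          simp only [hupf, reduceIte, Bool.false_eq_true, if_false, mul_one, one_mul, mul_assoc] at h0 ⊢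
                          exact h0
                      rw [t1, t2, mul_zero, add_zero]


theorem adjoin_le_span (V : unitary A) {x : A}
    (hx : x ∈ StarAlgebra.adjoin ℂ ({(V : A)} : Set A)) :
    x ∈ Submodule.span ℂ (Set.range (fun n : ℤ => ((V ^ n : unitary A) : A))) := by
  set w : ℤ → A := fun n => ((V ^ n : unitary A) : A) with hwdef
  have hwmul : ∀ a b : ℤ, w a * w b = w (a + b) := by
    intro a b
    show ((V ^ a : unitary A) : A) * ((V ^ b : unitary A) : A) = ((V ^ (a + b) : unitary A) : A)
    rw [← MulMemClass.coe_mul, ← zpow_add]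
  have hwstar : ∀ n : ℤ, star (w n) = w (-n) := by
    intro n
    show star ((V ^ n : unitary A) : A) = ((V ^ (-n) : unitary A) : A)
    rw [← Unitary.coe_star]
    congr 1
    rw [Unitary.star_eq_inv, ← zpow_neg]
  have hstarspan : ∀ y, y ∈ Submodule.span ℂ (Set.range w) →
      star y ∈ Submodule.span ℂ (Set.range w) := by
    intro y hy
    induction hy using Submodule.span_induction with
    | mem z hz =>
        obtain ⟨n, rfl⟩ := hz
        rw [hwstar]
        exact Submodule.subset_span ⟨-n, rfl⟩
    | zero => simpa using zero_mem _
    | add a b ha hb iha ihb => rw [star_add]; exact add_mem iha ihb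
    | smul r a ha ih => rw [star_smul]; exact Submodule.smul_mem _ _ ih
  induction hx using StarAlgebra.adjoin_induction with
  | mem y hy =>
      rw [Set.mem_singleton_iff] at hy
      subst hy
      refine Submodule.subset_span ⟨1, ?_⟩
      simp [hwdef]
  | algebraMap r =>
      have h0 : algebraMap ℂ A r = r • w 0 := by
        simp [hwdef, Algebra.algebraMap_eq_smul_one]
      rw [h0]
      exact Submodule.smul_mem _ _ (Submodule.subset_span ⟨0, rfl⟩)
  | add a b ha hb iha ihb => exact add_mem iha ihb
  | mul a b ha hb iha ihb =>
      have h2 : Submodule.span ℂ (Set.range w) * Submodule.span ℂ (Set.range w) ≤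
          Submodule.span ℂ (Set.range w) := by
        rw [Submodule.span_mul_span]
        refine Submodule.span_le.2 ?_
        rintro z ⟨x₁, ⟨a₁, rfl⟩, y₁, ⟨b₁, rfl⟩, rfl⟩
        show w a₁ * w b₁ ∈ Submodule.span ℂ (Set.range w)
        rw [hwmul]
        exact Submodule.subset_span ⟨a₁ + b₁, rfl⟩
      exact h2 (Submodule.mul_mem_mul iha ihb)
  | star a ha ih => exact hstarspan a ih

theorem centered_mem_span (V : unitary A)
    (hφv : ∀ n : ℤ, n ≠ 0 → φ (((V ^ n : unitary A) : A)) = 0) {x : A}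
    (hx : x ∈ StarAlgebra.adjoin ℂ ({(V : A)} : Set A)) (hφx : φ x = 0) :
    x ∈ Submodule.span ℂ ((fun n : ℤ => ((V ^ n : unitary A) : A)) ''
      {n : ℤ | n ≠ 0 ∨ φ (1 : A) = 0}) := by
  set w : ℤ → A := fun n => ((V ^ n : unitary A) : A) with hwdef
  by_cases h1 : φ (1 : A) = 0
  · have hset : {n : ℤ | n ≠ 0 ∨ φ (1 : A) = 0} = Set.univ := by
      ext n; simp [h1]
    rw [hset, Set.image_univ]
    exact adjoin_le_span V hx
  · have hset : {n : ℤ | n ≠ 0 ∨ φ (1 : A) = 0} = {n : ℤ | n ≠ 0} := by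
      ext n; simp [h1]
    rw [hset]
    have h2 := adjoin_le_span V hx
    have hsub : Set.range w ⊆ insert (1 : A) (w '' {n : ℤ | n ≠ 0}) := by
      rintro _ ⟨n, rfl⟩
      by_cases hn : n = 0
      · subst hn
        refine Set.mem_insert_iff.2 (Or.inl ?_)
        simp [hwdef]
      · exact Set.mem_insert_iff.2 (Or.inr ⟨n, hn, rfl⟩)
    have h3 := Submodule.span_mono hsub h2
    rw [Submodule.span_insert] at h3
    rcases Submodule.mem_sup.1 h3 with ⟨y, hy, z, hz, rfl⟩
    rcases Submodule.mem_span_singleton.1 hy with ⟨c, rfl⟩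
    have hφz : φ z = 0 := by
      have hle : Submodule.span ℂ (w '' {n : ℤ | n ≠ 0}) ≤ LinearMap.ker φ := by
        refine Submodule.span_le.2 ?_
        rintro _ ⟨n, hn, rfl⟩
        exact LinearMap.mem_ker.2 (hφv n hn)
      exact hle hz
    have hc : c = 0 := by
      rw [map_add, map_smul, smul_eq_mul, hφz, add_zero] at hφx
      exact (mul_eq_zero.1 hφx).resolve_right h1
    rw [hc]
    simpa using hz

end Stmt9

/-- Lemma: if `d` is a centered unitary in the center of a unital *-subalgebra `B` and
`u` is a Haar unitary which is *-free from `B`, then `ud` is a Haar unitary which is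
*-free from `B`. -/
theorem stmt_9 {A : Type*} [Ring A] [StarRing A] [Algebra ℂ A] [StarModule ℂ A]
    (φ : A →ₗ[ℂ] ℂ) (B : StarSubalgebra ℂ A)
    (d : A) (hdB : d ∈ B)
    (hd_unitary : star d * d = 1 ∧ d * star d = 1)
    (hd_central : ∀ x ∈ B, d * x = x * d)
    (hφd : φ d = 0) (hφds : φ (star d) = 0)
    (u : A) (hu : IsHaarUnitary φ u)
    (hufree : IsFreePair φ
      ((StarAlgebra.adjoin ℂ {u} : StarSubalgebra ℂ A) : Set A) (B : Set A)) :
    IsHaarUnitary φ (u * d) ∧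
    IsFreePair φ
      ((StarAlgebra.adjoin ℂ {u * d} : StarSubalgebra ℂ A) : Set A) (B : Set A) := by
  open Stmt9 in
  have hup1 : upw u true 1 = u := by simp [upw]
  have hupf : upw u false 1 = star u := by simp [upw]
  have hdsB : star d ∈ B := star_mem hdB
  have hv1 : star (u * d) * (u * d) = 1 := by
    rw [star_mul]
    calc star d * star u * (u * d) = star d * ((star u * u) * d) := by
          simp [mul_assoc]
      _ = 1 := by rw [hu.1, one_mul, hd_unitary.1]
  have hv2 : (u * d) * star (u * d) = 1 := by
    rw [star_mul]
    calc u * d * (star d * star u) = u * ((d * star d) * star u) := by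
          simp [mul_assoc]
      _ = 1 := by rw [hd_unitary.2, one_mul, hu.2.1]
  have hv : (u * d) ∈ unitary A := Unitary.mem_iff.2 ⟨hv1, hv2⟩
  set V : unitary A := ⟨u * d, hv⟩ with hVdef
  set w : ℤ → A := fun n => ((V ^ n : unitary A) : A) with hwdef
  have hw1 : ∀ k : ℕ, w (Int.ofNat (k + 1)) = (u * d) ^ (k + 1) := by
    intro k
    show ((V ^ (Int.ofNat (k + 1)) : unitary A) : A) = (u * d) ^ (k + 1)
    rw [show (Int.ofNat (k + 1)) = ((k + 1 : ℕ) : ℤ) from rfl, zpow_natCast,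
      SubmonoidClass.coe_pow]
  have hwn : ∀ k : ℕ, w (Int.negSucc k) = (star d * star u) ^ (k + 1) := by
    intro k
    show ((V ^ (Int.negSucc k) : unitary A) : A) = (star d * star u) ^ (k + 1)
    rw [zpow_negSucc, ← Unitary.star_eq_inv]
    rw [show ((star (V ^ (k + 1)) : unitary A) : A) = star ((V ^ (k + 1) : unitary A) : A)
      from rfl]
    rw [SubmonoidClass.coe_pow]
    show star ((u * d) ^ (k + 1)) = (star d * star u) ^ (k + 1)
    rw [star_pow, star_mul]
  have hw0 : w (Int.ofNat 0) = 1 := by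
    show ((V ^ (Int.ofNat 0) : unitary A) : A) = 1
    norm_num
  have hmain := Stmt9.main (φ := φ) (B := B) (u := u) d hd_unitary.2 hdB hd_central hφd hφds
    hu hufree w hw1 hwn hw0
  have CALL0 : ∀ (s : Bool) (Q : A), Pref φ B u s Q →
      φ (Q * (if s then d else 1)) = 0 := by
    intro s Q hQ
    have h0 := hmain 0 [] le_rfl List.isChain_nil (by simp) (by simp) (some s) s Q
      (fun t ht => by cases Option.some.inj ht; exact hQ) (by simp)
      (fun h => by rw [h]) (fun _ hf => by rw [hf]; simp)
    simpa [prodl_nil] using h0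
  have hpos : ∀ k : ℕ, φ ((u * d) ^ (k + 1)) = 0 := by
    intro k
    have hQ := (Pref.init (B := B) hu true (Or.inl le_rfl)).block hu hdB hφd k
    have h0 := CALL0 true _ hQ
    rw [id_pos]
    simp only [hup1, reduceIte, mul_one, one_mul, mul_assoc] at h0 ⊢
    exact h0
  have hneg : ∀ k : ℕ, φ ((star d * star u) ^ (k + 1)) = 0 := by
    intro k
    have hQ := (Pref.initb (B := B) hu hdsB hφds false (Or.inl le_rfl)).block hu hdsB hφds k
    have h0 := CALL0 false _ hQ
    rw [id_neg]
    simp only [hupf, reduceIte, Bool.false_eq_true, if_false, mul_one, one_mul,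
      mul_assoc] at h0 ⊢
    exact h0
  have hHaar : IsHaarUnitary φ (u * d) := by
    refine ⟨hv1, hv2, ?_⟩
    intro n hn
    obtain ⟨k, rfl⟩ : ∃ k, n = k + 1 := ⟨n - 1, by omega⟩
    constructor
    · exact hpos k
    · rw [star_mul]
      exact hneg k
  refine ⟨hHaar, ?_⟩
  -- the freeness part
  have hVcoe : (V : A) = u * d := rfl
  have hφw : ∀ n : ℤ, n ≠ 0 → φ (((V ^ n : unitary A) : A)) = 0 := by
    intro n hn
    cases n with
    | ofNat m =>
        cases m with
        | zero => exact absurd rfl hn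
        | succ k =>
            show φ (w (Int.ofNat (k + 1))) = 0
            rw [hw1 k]
            exact hpos k
    | negSucc k =>
        show φ (w (Int.negSucc k)) = 0
        rw [hwn k]
        exact hneg k
  intro k x f hmem hcent halt
  set l : List (Bool × A) := List.ofFn (fun i => (f i, x i)) with hldef
  have hgoal : (List.ofFn x) = l.map Prod.snd := by
    rw [hldef, List.map_ofFn]
    rfl
  rw [hgoal]
  show φ (prodl l) = 0
  have hchl : l.Chain' (fun p q => p.1 ≠ q.1) := by
    rw [hldef]
    refine List.isChain_ofFn.2 ?_
    intro i hi
    exact halt ⟨i, by omega⟩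
  have hmeml : ∀ p ∈ l, if p.1 then
      p.2 ∈ Submodule.span ℂ (w '' {n : ℤ | n ≠ 0 ∨ φ (1 : A) = 0})
    else (p.2 ∈ B ∧ φ p.2 = 0) := by
    intro p hp
    rw [hldef, List.mem_ofFn] at hp
    obtain ⟨i, rfl⟩ := hp
    have hm := hmem i
    have hc := hcent i
    cases hfi : f i
    · simp only [hfi, Bool.false_eq_true, if_false] at hm ⊢
      exact ⟨hm, hc⟩
    · simp only [hfi, if_true] at hm ⊢
      have hx' : x i ∈ StarAlgebra.adjoin ℂ ({(V : A)} : Set A) := by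
        rw [hVcoe]
        exact hm
      exact centered_mem_span V hφw hx' hc
  set rest : List (Bool × A) := List.ofFn (fun i : Fin k => (f i.succ, x i.succ)) with hrest
  have hl2 : l = (f 0, x 0) :: rest := by
    rw [hldef, hrest]
    exact List.ofFn_succ
  have hchR : rest.Chain' (fun p q => p.1 ≠ q.1) := by
    have := hl2 ▸ hchl
    exact this.tail
  have hmemR : ∀ p ∈ rest, if p.1 then
      p.2 ∈ Submodule.span ℂ (w '' {n : ℤ | n ≠ 0 ∨ φ (1 : A) = 0})
    else (p.2 ∈ B ∧ φ p.2 = 0) :=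
    fun p hp => hmeml p (by rw [hl2]; exact List.mem_cons_of_mem _ hp)
  cases hf0 : f 0
  · -- word starts on the B side
    have hhd0 : ∀ p ∈ l.head?, p.1 = false := by
      intro p hp
      rw [hl2] at hp
      simp only [List.head?_cons, Option.mem_some_iff] at hp
      subst hp
      exact hf0
    have h0 := hmain l.length l le_rfl hchl hmeml hhd0 none false 1 (by simp)
      (fun _ => ⟨rfl, rfl, by rw [hl2]; simp⟩) (by simp) (by simp)
    simpa using h0
  · -- word starts on the adjoin side
    have hchl2 : List.Chain' (fun p q : Bool × A => p.1 ≠ q.1) ((f 0, x 0) :: rest) :=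
      hl2 ▸ hchl
    have hhdR : ∀ p ∈ rest.head?, p.1 = false := by
      intro p hp
      have h2 := (List.isChain_cons.1 hchl2).1 p hp
      cases hq : p.1
      · rfl
      · rw [hq] at h2
        rw [show (f 0, x 0).1 = f 0 from rfl, hf0] at h2
        exact absurd rfl h2
    have CALLR : ∀ (s : Bool) (Q : A), Pref φ B u s Q →
        φ (Q * (if s then d else 1) * prodl rest) = 0 := fun s Q hQ =>
      hmain rest.length rest le_rfl hchR hmemR hhdR (some s) s Q
        (fun t ht => by cases Option.some.inj ht; exact hQ) (by simp)
        (fun h => by rw [h]) (fun _ hf => by rw [hf]; simp)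
    have hx0 : x 0 ∈ Submodule.span ℂ (w '' {n : ℤ | n ≠ 0 ∨ φ (1 : A) = 0}) := by
      have := hmeml (f 0, x 0) (by rw [hl2]; exact List.mem_cons_self)
      simp only [hf0, if_true] at this
      exact this
    rw [hl2, prodl_cons]
    show φ (x 0 * prodl rest) = 0
    generalize x 0 = x0 at hx0 ⊢
    induction hx0 using Submodule.span_induction with
    | zero => simp
    | add y z hy hz ihy ihz => simp only [add_mul, map_add, ihy, ihz, add_zero]
    | smul a y hy ih => simp only [smul_mul_assoc, map_smul, smul_eq_mul, ih, mul_zero]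
    | mem y hy =>
        obtain ⟨n, hn, rfl⟩ := hy
        simp only [Set.mem_setOf_eq] at hn
        cases n with
        | ofNat m =>
            cases m with
            | zero =>
                have h1 : φ (1 : A) = 0 := hn.resolve_left (by simp)
                show φ (w (Int.ofNat 0) * prodl rest) = 0
                rw [hw0, one_mul]
                rcases Nat.eq_zero_or_pos k with hk | hk
                · have hre : rest = [] := by
                    subst hk
                    rw [hrest]
                    simp
                  rw [hre, prodl_nil]
                  exact h1
                · have hne : rest ≠ [] := by
                    intro h
                    have := congrArg List.length h
                    rw [hrest] at this
                    simp at this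
                    omega
                  have h0 := hmain rest.length rest le_rfl hchR hmemR hhdR none false 1
                    (by simp) (fun _ => ⟨rfl, rfl, hne⟩) (by simp) (by simp)
                  simpa using h0
            | succ k' =>
                show φ (w (Int.ofNat (k' + 1)) * prodl rest) = 0
                rw [hw1 k']
                have hQ := (Pref.init (B := B) hu true (Or.inl le_rfl)).block hu hdB hφd k'
                have h0 := CALLR true _ hQ
                rw [id_pos]
                simp only [hup1, reduceIte, mul_one, one_mul, mul_assoc] at h0 ⊢
                exact h0
        | negSucc k' =>
            show φ (w (Int.negSucc k') * prodl rest) = 0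
            rw [hwn k']
            have hQ := (Pref.initb (B := B) hu hdsB hφds false
              (Or.inl le_rfl)).block hu hdsB hφds k'
            have h0 := CALLR false _ hQ
            rw [id_neg]
            simp only [hupf, reduceIte, Bool.false_eq_true, if_false, mul_one, one_mul,
              mul_assoc] at h0 ⊢
            exact h0

end
end

section
/- Let A be a unital complex *-algebra with a linear functional φ : A → ℂ, let B ⊆ A be a unital *-subalgebra, let d ∈ B be a unitary in the center of B with φ(d) = φ(d*) = 0, and let u ∈ A be a Haar unitary which is *-free from B with respect to φ. Then for every integer n ≠ 0, φ((ud)^n) = 0; equivalently, ud is a unitary with φ((ud)^n) = φ(((ud)*)^n) = 0 for all n ≥ 1. -/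
noncomputable section

/-- Product of an alternating list `a, b, a, b, …` of length `2n+2`. -/
lemma alt_prod {A : Type*} [Ring A] (a b : A) :
    ∀ n : ℕ, (List.ofFn (fun i : Fin (2*n+2) => if i.val % 2 = 0 then a else b)).prod
      = (a*b)^(n+1) := by
  intro n
  induction n with
  | zero => simp
  | succ m ih =>
    show (List.ofFn (fun i : Fin (2*m+2+2) => if i.val % 2 = 0 then a else b)).prod = _
    rw [List.ofFn_succ, List.ofFn_succ]
    simp only [Fin.val_succ, Fin.val_zero, List.prod_cons,
      show ∀ k:ℕ, (k+1+1)%2 = k%2 from fun k => by omega]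
    rw [ih]; norm_num [← mul_assoc, pow_succ]
    rw [← pow_mul_comm']
    simp [mul_assoc]

lemma IsFreePair.symm' {A : Type*} [Ring A] [Algebra ℂ A]
    (φ : A →ₗ[ℂ] ℂ) {S₁ S₂ : Set A} (h : IsFreePair φ S₁ S₂) :
    IsFreePair φ S₂ S₁ := by
  intro k x f hmem hcent halt
  refine h k x (fun i => ! f i) ?_ hcent ?_
  · intro i
    have hi := hmem i
    cases hfi : f i <;> simp only [hfi] at hi <;> simpa [hfi] using hi
  · intro i
    have := halt i
    cases h1 : f i.castSucc <;> cases h2 : f i.succ <;> simp_all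

/-- The key vanishing lemma: the trace of an alternating word vanishes. -/
lemma alt_vanish {A : Type*} [Ring A] [Algebra ℂ A]
    (φ : A →ₗ[ℂ] ℂ) (S₁ S₂ : Set A)
    (hfree : IsFreePair φ S₁ S₂) (a b : A)
    (ha : a ∈ S₁) (hb : b ∈ S₂) (hφa : φ a = 0) (hφb : φ b = 0) (n : ℕ) :
    φ ((a * b) ^ (n + 1)) = 0 := by
  rw [← alt_prod a b n]
  exact hfree (2*n+1) (fun i : Fin (2*n+1+1) => if i.val % 2 = 0 then a else b)
    (fun i => decide (i.val % 2 = 0))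
    (by
      intro i
      by_cases h : (i : ℕ) % 2 = 0 <;> simp [h, ha, hb])
    (by
      intro i
      by_cases h : (i : ℕ) % 2 = 0 <;> simp [h, hφa, hφb])
    (by
      intro i
      simp only [ne_eq, Fin.coe_castSucc, Fin.val_succ, decide_eq_decide]
      omega)

/-- If `d` is a centered unitary in the center of a unital *-subalgebra `B` and
`u` is a Haar unitary which is *-free from `B`, then `ud` is again a Haar
unitary: `φ((ud)ⁿ) = φ(((ud)*)ⁿ) = 0` for all `n ≥ 1` (equivalently,
`φ((ud)ⁿ) = 0` for all integers `n ≠ 0`). -/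
theorem stmt_10 {A : Type*} [Ring A] [StarRing A] [Algebra ℂ A] [StarModule ℂ A]
    (φ : A →ₗ[ℂ] ℂ) (B : StarSubalgebra ℂ A)
    (d : A) (hdB : d ∈ B)
    (hd_unitary : star d * d = 1 ∧ d * star d = 1)
    (hd_central : ∀ x ∈ B, d * x = x * d)
    (hφd : φ d = 0) (hφds : φ (star d) = 0)
    (u : A) (hu : IsHaarUnitary φ u)
    (hufree : IsFreePair φ
      ((StarAlgebra.adjoin ℂ {u} : StarSubalgebra ℂ A) : Set A) (B : Set A)) :
    IsHaarUnitary φ (u * d) := by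
  obtain ⟨huu, huu', humom⟩ := hu
  have huA : u ∈ (StarAlgebra.adjoin ℂ {u} : StarSubalgebra ℂ A) :=
    StarAlgebra.subset_adjoin ℂ {u} rfl
  have husA : star u ∈ (StarAlgebra.adjoin ℂ {u} : StarSubalgebra ℂ A) :=
    star_mem huA
  have hφu : φ u = 0 := by have := (humom 1 le_rfl).1; simpa using this
  have hφus : φ (star u) = 0 := by have := (humom 1 le_rfl).2; simpa using this
  refine ⟨?_, ?_, ?_⟩
  · rw [star_mul]
    calc star d * star u * (u * d) = star d * (star u * u) * d := by
          simp [mul_assoc]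
      _ = 1 := by rw [huu]; simp [hd_unitary.1]
  · rw [star_mul]
    calc u * d * (star d * star u) = u * (d * star d) * star u := by
          simp [mul_assoc]
      _ = 1 := by rw [hd_unitary.2]; simp [huu']
  · intro n hn
    obtain ⟨m, rfl⟩ : ∃ m, n = m + 1 := ⟨n - 1, by omega⟩
    constructor
    · exact alt_vanish φ _ _ hufree u d huA hdB hφu hφd m
    · rw [star_mul]
      exact alt_vanish φ _ _ (IsFreePair.symm' φ hufree) (star d) (star u)
        (star_mem hdB) husA hφds hφus m
end
end
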